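/- Let X be a locally compact Tychonoff space and let Z be a zero-set of βX with Z ∩ X = ∅. Then Z is regular-closed in X* = βX\X; that is, Z = cl_{X*}(int_{X*} Z). -/

import Mathlib

open Set Topology Filter

universe u

/-- A one-point Tychonoff extension of `X`: a Tychonoff space containing (a homeomorphic copy
of) `X` as a dense subspace whose complement is a single point `pt`. -/
structure OnePointExt (X : Type u) [TopologicalSpace X] : Type (u + 1) where
  carrier : Type u
  top : TopologicalSpace carrier
  t35 : @T35Space carrier top
  ι : X → carrier
  emb : @Topology.IsEmbedding X carrier _ top ι
  pt : carrier
  range_eq : Set.range ι = {pt}ᶜ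
  dense : @DenseRange carrier top X ι

attribute [instance] OnePointExt.top OnePointExt.t35

variable {X : Type u} [TopologicalSpace X]

/-- The partial order on one-point extensions: `Y₁ ≤ Y₂` iff there is a continuous map from
`Y₂` into `Y₁` fixing `X` pointwise. -/
def OnePointExt.le (Y1 Y2 : OnePointExt X) : Prop :=
  ∃ f : Y2.carrier → Y1.carrier, Continuous f ∧ ∀ x, f (Y2.ι x) = Y1.ι x

/-- Equivalence of extensions: a homeomorphism fixing `X` pointwise. -/
def OnePointExt.equiv (Y1 Y2 : OnePointExt X) : Prop :=
  ∃ h : Y1.carrier ≃ₜ Y2.carrier, ∀ x, h (Y1.ι x) = Y2.ι x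

/-- `τ_Y : βX → βY`, the unique continuous extension of `id_X`. -/
noncomputable def OnePointExt.tau (Y : OnePointExt X) : StoneCech X → StoneCech Y.carrier :=
  stoneCechExtend (continuous_stoneCechUnit.comp Y.emb.continuous)

/-- `Θ_X(Y) = τ_Y⁻¹(Y \ X)`, a subset of `βX`. -/
noncomputable def OnePointExt.theta (Y : OnePointExt X) : Set (StoneCech X) :=
  Y.tau ⁻¹' {stoneCechUnit Y.pt}

/-- A zero-set: `f⁻¹(0)` for a continuous `f : Z → [0,1]`. -/
def IsZeroSet {Z : Type u} [TopologicalSpace Z] (A : Set Z) : Prop :=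
  ∃ f : Z → unitInterval, Continuous f ∧ A = f ⁻¹' {0}

/-- A cozero-set: a complement of a zero-set. -/
def IsCozeroSet {Z : Type u} [TopologicalSpace Z] (A : Set Z) : Prop :=
  ∃ f : Z → unitInterval, Continuous f ∧ A = (f ⁻¹' {0})ᶜ

/-- `λ_P X = ⋃ { int_{βX} cl_{βX} C : C a cozero-set of X whose closure in X has P }`. -/
def lambdaP (P : (Z : Type u) → [TopologicalSpace Z] → Prop) (X : Type u)
    [TopologicalSpace X] : Set (StoneCech X) :=
  ⋃ C ∈ {C : Set X | IsCozeroSet C ∧ P (closure C)},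
    interior (closure (stoneCechUnit '' C))

/-- A pseudocompact space: every continuous real-valued function is bounded. -/
def Pseudocompact (Z : Type u) [TopologicalSpace Z] : Prop :=
  ∀ f : Z → ℝ, Continuous f → ∃ M, ∀ z, |f z| ≤ M

/-- `P` is a topological property: it is invariant under homeomorphisms. -/
def TopProperty (P : (Z : Type u) → [TopologicalSpace Z] → Prop) : Prop :=
  ∀ (Z W : Type u) [TopologicalSpace Z] [TopologicalSpace W], Z ≃ₜ W → P Z → P W

/-- `P` is closed hereditary: closed subspaces of a space with `P` have `P`. -/
def ClosedHereditary (P : (Z : Type u) → [TopologicalSpace Z] → Prop) : Prop :=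
  ∀ (Z : Type u) [TopologicalSpace Z], P Z → ∀ F : Set Z, IsClosed F → P F

/-- `P` is preserved under finite closed sums of subspaces. -/
def FiniteClosedSums (P : (Z : Type u) → [TopologicalSpace Z] → Prop) : Prop :=
  ∀ (Z : Type u) [TopologicalSpace Z] [T2Space Z] (n : ℕ) (F : Fin n → Set Z),
    (∀ i, IsClosed (F i)) → (∀ i, P (F i)) → (⋃ i, F i) = univ → P Z

/-- `P` is preserved under locally finite closed sums of subspaces. -/
def LocallyFiniteClosedSums (P : (Z : Type u) → [TopologicalSpace Z] → Prop) : Prop :=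
  ∀ (Z : Type u) [TopologicalSpace Z] [T2Space Z] (ι : Type u) (F : ι → Set Z),
    LocallyFinite F → (∀ i, IsClosed (F i)) → (∀ i, P (F i)) → (⋃ i, F i) = univ → P Z

/-- `P` is preserved under countable closed sums of subspaces. -/
def CountableClosedSums (P : (Z : Type u) → [TopologicalSpace Z] → Prop) : Prop :=
  ∀ (Z : Type u) [TopologicalSpace Z] [T2Space Z] (F : ℕ → Set Z),
    (∀ i, IsClosed (F i)) → (∀ i, P (F i)) → (⋃ i, F i) = univ → P Z

/-- Mrówka's condition (W): if a Tychonoff space `T` has a point `p` with an open base `B` at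
`p` such that `T \ b` has `P` for each `b ∈ B`, then `T` has `P`. -/
def MrowkaW (P : (Z : Type u) → [TopologicalSpace Z] → Prop) : Prop :=
  ∀ (T : Type u) [TopologicalSpace T] [T35Space T] (p : T) (B : Set (Set T)),
    (∀ b ∈ B, IsOpen b ∧ p ∈ b) →
    (∀ V : Set T, IsOpen V → p ∈ V → ∃ b ∈ B, b ⊆ V) →
    (∀ b ∈ B, P (↥(bᶜ))) → P T

/-- `X` is locally-P: every point has an open neighborhood whose closure has `P`. -/
def LocallyP (P : (Z : Type u) → [TopologicalSpace Z] → Prop)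
    (X : Type u) [TopologicalSpace X] : Prop :=
  ∀ x : X, ∃ U : Set X, IsOpen U ∧ x ∈ U ∧ P (closure U)

/-- `P` coincides with pseudocompactness. -/
def IsPseudocompactness (P : (Z : Type u) → [TopologicalSpace Z] → Prop) : Prop :=
  ∀ (Z : Type u) [TopologicalSpace Z], P Z ↔ Pseudocompact Z

/-- A `P`-far one-point extension: for every zero-set `Z` of `X` contained in a cozero-set `C`
of `X` whose closure has `P`, the closure of `Z` in the extension misses the remainder. -/
def OnePointExt.PFar (P : (Z : Type u) → [TopologicalSpace Z] → Prop)
    (Y : OnePointExt X) : Prop :=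
  ∀ Z C : Set X, IsZeroSet Z → IsCozeroSet C → P (closure C) → Z ⊆ C →
    Y.pt ∉ closure (Y.ι '' Z)

/-- Čech-complete: `Z` is a Gδ-set in `βZ`. -/
def CechComplete (Z : Type u) [TopologicalSpace Z] : Prop :=
  IsGδ (Set.range (stoneCechUnit : Z → StoneCech Z))

/-- The extension is first countable at the added point. -/
def OnePointExt.FirstCountableAtPt (Y : OnePointExt X) : Prop :=
  (𝓝 Y.pt).IsCountablyGenerated

/-- Strong zero-dimensionality: `βX` has an open base of clopen sets. -/
def StronglyZeroDimensional (X : Type u) [TopologicalSpace X] : Prop :=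
  ∀ U : Set (StoneCech X), IsOpen U → ∀ x ∈ U,
    ∃ V : Set (StoneCech X), IsClopen V ∧ x ∈ V ∧ V ⊆ U

/-- `Δ` is an order-isomorphism from the subset `A` of one-point extensions of `X` (with the
order `≤`) onto the subset `B` of one-point extensions of `Y`, where extensions are regarded
up to the equivalence `OnePointExt.equiv`: `Δ` maps `A` into `B`, reflects and preserves `≤`
on `A`, and every member of `B` is equivalent to the image of a member of `A`. -/
def RestrictedOrderIso {X Y : Type u} [TopologicalSpace X] [TopologicalSpace Y]
    (A : Set (OnePointExt X)) (B : Set (OnePointExt Y))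
    (Δ : OnePointExt X → OnePointExt Y) : Prop :=
  (∀ T ∈ A, Δ T ∈ B) ∧
  (∀ T1 ∈ A, ∀ T2 ∈ A, (T1.le T2 ↔ (Δ T1).le (Δ T2))) ∧
  (∀ S ∈ B, ∃ T ∈ A, (Δ T).equiv S)


theorem key_stmt11 {X : Type u} [TopologicalSpace X] [T35Space X] [LocallyCompactSpace X]
    (f : StoneCech X → unitInterval) (hf : Continuous f)
    (hpos : ∀ x : X, f (stoneCechUnit x) ≠ 0)
    (p : StoneCech X) (hp : f p = 0) (U : Set (StoneCech X)) (hU : IsOpen U) (hpU : p ∈ U) :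
    ∃ q ∈ U, q ∉ Set.range (stoneCechUnit : X → StoneCech X) ∧
      ∃ N : Set (StoneCech X), IsOpen N ∧ q ∈ N ∧
        ∀ r ∈ N, r ∉ Set.range (stoneCechUnit : X → StoneCech X) → f r = 0 := by
  set e : X → StoneCech X := stoneCechUnit with he
  have hfc : Continuous fun z => (f z : ℝ) := continuous_subtype_val.comp hf
  -- shrink U
  obtain ⟨t, htn, htc, hts⟩ := exists_mem_nhds_isClosed_subset (hU.mem_nhds hpU)
  set U' : Set (StoneCech X) := interior t with hU'
  have hpU' : p ∈ U' := mem_interior_iff_mem_nhds.2 htn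
  have hclU' : closure U' ⊆ U := (closure_minimal interior_subset htc).trans hts
  -- the basic construction, for each n
  have hstep : ∀ n : ℕ, ∃ (x : X) (G : Set X) (φ : X → ℝ),
      IsOpen G ∧ x ∈ G ∧ IsCompact (closure G) ∧
      (∀ y ∈ closure G, e y ∈ U' ∧ ((f (e y) : ℝ) < 1 / (n + 1))) ∧
      Continuous φ ∧ φ x = 1 ∧ (∀ y, 0 ≤ φ y) ∧ Function.support φ ⊆ G := by
    intro n
    have hOo : IsOpen (U' ∩ {z | (f z : ℝ) < 1 / (n + 1)}) :=
      isOpen_interior.inter (isOpen_lt hfc continuous_const)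
    have hpO : p ∈ U' ∩ {z | (f z : ℝ) < 1 / (n + 1)} := by
      refine ⟨hpU', ?_⟩
      simp only [mem_setOf_eq, hp]
      positivity
    obtain ⟨x, hx⟩ := denseRange_stoneCechUnit.exists_mem_open hOo ⟨p, hpO⟩
    have hWo : IsOpen (e ⁻¹' (U' ∩ {z | (f z : ℝ) < 1 / (n + 1)})) :=
      hOo.preimage continuous_stoneCechUnit
    obtain ⟨K, hKn, hKsub, hKc⟩ := local_compact_nhds (hWo.mem_nhds hx)
    have hGK : closure (interior K) ⊆ K := closure_minimal interior_subset hKc.isClosed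
    have hxG : x ∈ interior K := mem_interior_iff_mem_nhds.2 hKn
    obtain ⟨ψ, hψc, hψx, hψ1⟩ := CompletelyRegularSpace.completely_regular x (interior K)ᶜ
      isOpen_interior.isClosed_compl (by simpa using hxG)
    refine ⟨x, interior K, fun y => 1 - (ψ y : ℝ), isOpen_interior, hxG,
      hKc.of_isClosed_subset isClosed_closure hGK, ?_, ?_, ?_, ?_, ?_⟩
    · intro y hy
      exact hKsub (hGK hy)
    · exact continuous_const.sub (continuous_subtype_val.comp hψc)
    · simp [hψx]
    · intro y
      show (0:ℝ) ≤ 1 - (ψ y : ℝ)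
      linarith [(ψ y).2.2]
    · intro y hy
      by_contra hyG
      have : ψ y = 1 := hψ1 hyG
      simp [this] at hy
  choose x G φ hGo hxG hGc hGsub hφc hφx hφ0 hφs using hstep
  -- local finiteness of the supports
  have hlf : LocallyFinite fun n => Function.support (φ n) := by
    intro y
    have hy0 : (0 : ℝ) < f (e y) :=
      lt_of_le_of_ne (f (e y)).2.1 (fun h => hpos y (Subtype.ext h.symm))
    refine ⟨e ⁻¹' {z | (f (e y) : ℝ) / 2 < (f z : ℝ)}, ?_, ?_⟩
    · exact ((isOpen_lt continuous_const hfc).preimage continuous_stoneCechUnit).mem_nhds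
        (by simp only [mem_preimage, mem_setOf_eq]; linarith)
    · refine Set.Finite.subset (Set.finite_Iio ⌈2 / (f (e y) : ℝ)⌉₊) ?_
      rintro n ⟨w, hw1, hw2⟩
      have h1 : (f (e w) : ℝ) < 1 / (n + 1) := (hGsub n w (subset_closure (hφs n hw1))).2
      have h2 : (f (e y) : ℝ) / 2 < (f (e w) : ℝ) := hw2
      have h4 : (f (e y) : ℝ) / 2 < 1 / (n + 1) := h2.trans h1
      rw [div_lt_div_iff₀ two_pos (by positivity)] at h4
      have : (n : ℝ) < 2 / (f (e y) : ℝ) := by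
        rw [lt_div_iff₀ hy0]
        nlinarith
      exact mem_Iio.2 (Nat.lt_ceil.2 this)
  set φs : X → ℝ := fun y => ∑ᶠ n, φ n y with hφsdef
  have hφsc : Continuous φs := continuous_finsum hφc hlf
  set g : X → unitInterval := fun y => Set.projIcc (0 : ℝ) 1 zero_le_one (φs y) with hgdef
  have hgc : Continuous g := continuous_projIcc.comp hφsc
  have hg1 : ∀ n, g (x n) = 1 := by
    intro n
    have h1 : (1 : ℝ) ≤ φs (x n) := by
      have := single_le_finsum n (hlf.point_finite (x n)) (fun j => hφ0 j (x n))
      rw [hφx n] at this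
      exact this
    simp only [hgdef]
    rw [Set.projIcc_of_right_le zero_le_one h1]
    rfl
  have hg0 : ∀ y, (∀ n, y ∉ G n) → g y = 0 := by
    intro y hy
    have h0 : φs y = 0 := finsum_eq_zero_of_forall_eq_zero fun n => by
      by_contra h
      exact hy n (hφs n h)
    simp only [hgdef, h0]
    rw [Set.projIcc_of_le_left zero_le_one le_rfl]
    rfl
  set Φ : StoneCech X → unitInterval := stoneCechExtend hgc with hΦdef
  have hΦc : Continuous Φ := continuous_stoneCechExtend hgc
  have hΦe : ∀ y, Φ (e y) = g y := fun y => congrFun (stoneCechExtend_extends hgc) y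
  -- the cluster point q of the sequence n ↦ e (x n)
  set z : ℕ → StoneCech X := fun n => e (x n) with hzdef
  obtain ⟨q, hq⟩ := exists_clusterPt_of_compactSpace (map z atTop)
  have hqmem : ∀ m : ℕ, q ∈ closure (z '' Ici m) := by
    intro m
    refine mem_closure_iff_clusterPt.2 (hq.mono ?_)
    refine le_principal_iff.2 (mem_map.2 (mem_of_superset (mem_atTop m) ?_))
    exact fun n hn => mem_image_of_mem z hn
  have hzU' : ∀ n, z n ∈ U' := fun n => (hGsub n (x n) (subset_closure (hxG n))).1
  have hsmall : ∀ m : ℕ, closure (z '' Ici m) ⊆ {w | (f w : ℝ) ≤ 1 / (m + 1)} := by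
    intro m
    refine closure_minimal ?_ (isClosed_le hfc continuous_const)
    rintro _ ⟨n, hn, rfl⟩
    have h1 : (f (z n) : ℝ) < 1 / (n + 1) := (hGsub n (x n) (subset_closure (hxG n))).2
    have h2 : (1 : ℝ) / (n + 1) ≤ 1 / (m + 1) := by
      apply one_div_le_one_div_of_le (by positivity)
      have : (m : ℝ) ≤ n := Nat.cast_le.2 hn
      linarith
    exact le_of_lt (lt_of_lt_of_le h1 h2)
  have hfq : f q = 0 := by
    have hle : ∀ m : ℕ, (f q : ℝ) ≤ 1 / (m + 1) := fun m => hsmall m (hqmem m)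
    have h0 : (f q : ℝ) ≤ 0 :=
      ge_of_tendsto' tendsto_one_div_add_atTop_nhds_zero_nat hle
    exact Subtype.ext (le_antisymm h0 (f q).2.1)
  have hqX : q ∉ Set.range e := by
    rintro ⟨y, rfl⟩
    exact hpos y hfq
  have hqU : q ∈ U := by
    have : closure (z '' Ici 0) ⊆ closure U' :=
      closure_mono (by rintro _ ⟨n, -, rfl⟩; exact hzU' n)
    exact hclU' (this (hqmem 0))
  have hΦq : Φ q = 1 := by
    have hsub : z '' Ici 0 ⊆ Φ ⁻¹' {1} := by
      rintro _ ⟨n, -, rfl⟩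
      simp only [mem_preimage, mem_singleton_iff]
      rw [hΦe, hg1]
    have : closure (z '' Ici 0) ⊆ Φ ⁻¹' {1} :=
      closure_minimal hsub (isClosed_singleton.preimage hΦc)
    exact this (hqmem 0)
  -- the open set N
  refine ⟨q, hqU, hqX, (Φ ⁻¹' {0})ᶜ, (isClosed_singleton.preimage hΦc).isOpen_compl,
    by simp [hΦq], ?_⟩
  intro r hrN hrX
  -- show f r = 0
  have hrange : ∀ m : ℕ, r ∈ closure (e '' (⋃ n, G n)ᶜ) ∪
      (⋃ n ∈ Iio m, closure (e '' G n)) ∪ closure (e '' (⋃ n ∈ Ici m, G n)) := by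
    intro m
    have hC : IsClosed (closure (e '' (⋃ n, G n)ᶜ) ∪
        (⋃ n ∈ Iio m, closure (e '' G n)) ∪ closure (e '' (⋃ n ∈ Ici m, G n))) :=
      ((isClosed_closure.union ((Set.finite_Iio m).isClosed_biUnion
        fun _ _ => isClosed_closure)).union isClosed_closure)
    have hsub : Set.range e ⊆ closure (e '' (⋃ n, G n)ᶜ) ∪
        (⋃ n ∈ Iio m, closure (e '' G n)) ∪ closure (e '' (⋃ n ∈ Ici m, G n)) := by
      rintro _ ⟨y, rfl⟩
      by_cases hy : ∃ n, y ∈ G n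
      · obtain ⟨n, hn⟩ := hy
        by_cases hnm : n < m
        · exact Or.inl (Or.inr (mem_biUnion hnm (subset_closure (mem_image_of_mem e hn))))
        · refine Or.inr (subset_closure (mem_image_of_mem e ?_))
          exact mem_biUnion (not_lt.1 hnm) hn
      · push_neg at hy
        exact Or.inl (Or.inl (subset_closure (mem_image_of_mem e (by simpa using hy))))
    have hr : r ∈ closure (Set.range e) := by
      rw [denseRange_stoneCechUnit.closure_range]
      trivial
    exact closure_minimal hsub hC hr
  have hfr : ∀ m : ℕ, (f r : ℝ) ≤ 1 / (m + 1) := by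
    intro m
    rcases hrange m with (hr1 | hr2) | hr3
    · -- Φ r = 0, contradiction
      exfalso
      apply hrN
      have hsub : e '' (⋃ n, G n)ᶜ ⊆ Φ ⁻¹' {0} := by
        rintro _ ⟨y, hy, rfl⟩
        simp only [mem_preimage, mem_singleton_iff]
        rw [hΦe, hg0 y (by simpa using hy)]
      exact closure_minimal hsub (isClosed_singleton.preimage hΦc) hr1
    · -- r ∈ range e, contradiction
      exfalso
      apply hrX
      obtain ⟨n, -, hn⟩ := mem_iUnion₂.1 hr2
      have himg : closure (e '' G n) ⊆ e '' closure (G n) := by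
        apply closure_minimal (image_mono subset_closure)
        exact ((hGc n).image continuous_stoneCechUnit).isClosed
      obtain ⟨y, -, hy⟩ := himg hn
      exact ⟨y, hy⟩
    · -- small f
      have hsub : e '' (⋃ n ∈ Ici m, G n) ⊆ {w | (f w : ℝ) ≤ 1 / (m + 1)} := by
        rintro _ ⟨y, hy, rfl⟩
        obtain ⟨n, hn, hyn⟩ := mem_iUnion₂.1 hy
        have h1 : (f (e y) : ℝ) < 1 / (n + 1) := (hGsub n y (subset_closure hyn)).2
        have h2 : (1 : ℝ) / (n + 1) ≤ 1 / (m + 1) := by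
          apply one_div_le_one_div_of_le (by positivity)
          have : (m : ℝ) ≤ n := Nat.cast_le.2 hn
          linarith
        exact le_of_lt (lt_of_lt_of_le h1 h2)
      exact closure_minimal hsub (isClosed_le hfc continuous_const) hr3
  have h0 : (f r : ℝ) ≤ 0 := ge_of_tendsto' tendsto_one_div_add_atTop_nhds_zero_nat hfr
  exact Subtype.ext (le_antisymm h0 (f r).2.1)

/-- Let `X` be a locally compact Tychonoff space and let `Z` be a zero-set
of `βX` with `Z ∩ X = ∅`.  Then `Z` is regular-closed in `X* = βX \ X`:
`Z = cl_{X*}(int_{X*} Z)`. -/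
theorem stmt11 {X : Type u} [TopologicalSpace X] [T35Space X] [LocallyCompactSpace X]
    (Z : Set (StoneCech X)) (hZ : IsZeroSet Z)
    (hdisj : Z ∩ Set.range (stoneCechUnit : X → StoneCech X) = ∅) :
    (Subtype.val ⁻¹' Z : Set ↥((Set.range (stoneCechUnit : X → StoneCech X))ᶜ)) =
      closure (interior
        (Subtype.val ⁻¹' Z : Set ↥((Set.range (stoneCechUnit : X → StoneCech X))ᶜ))) := by
  obtain ⟨f, hf, hZeq⟩ := hZ
  subst hZeq
  have hpos : ∀ x : X, f (stoneCechUnit x) ≠ 0 := by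
    intro x h
    exact (Set.eq_empty_iff_forall_notMem.1 hdisj (stoneCechUnit x)) ⟨h, ⟨x, rfl⟩⟩
  apply Set.Subset.antisymm
  · intro w hw
    rw [mem_closure_iff]
    intro o ho hwo
    obtain ⟨U, hU, hUo⟩ := isOpen_induced_iff.1 ho
    subst hUo
    obtain ⟨q, hqU, hqX, N, hNo, hqN, hN⟩ :=
      key_stmt11 f hf hpos w.val (by simpa using hw) U hU hwo
    refine ⟨⟨q, hqX⟩, hqU, ?_⟩
    refine mem_interior.2 ⟨Subtype.val ⁻¹' N, ?_, hNo.preimage continuous_subtype_val, hqN⟩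
    intro w' hw'
    simpa using hN w'.val hw' w'.2
  · exact closure_minimal interior_subset
      ((isClosed_singleton.preimage hf).preimage continuous_subtype_val)
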